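/- Let K be a nonempty compact Hausdorff connected F-space and let g : K → ℝ be continuous and nonconstant. Let t be the midpoint of the (nontrivial compact) interval g[K]. Then the closed sets cl(g⁻¹((-∞,t))) and cl(g⁻¹((t,∞))) are disjoint, their union is not all of K, and consequently the interior of g⁻¹({t}) is nonempty. -/

import Mathlib

open Set Topology

noncomputable section

/-- A set is an `Fσ` set if it is a countable union of closed sets. -/
def IsFSigma {X : Type*} [TopologicalSpace X] (s : Set X) : Prop :=
  ∃ F : ℕ → Set X, (∀ n, IsClosed (F n)) ∧ s = ⋃ n, F n

/-- A topological space is an `F`-space if any two disjoint open `Fσ` subsets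
have disjoint closures. -/
def IsFSpace (X : Type*) [TopologicalSpace X] : Prop :=
  ∀ s t : Set X, IsOpen s → IsOpen t → IsFSigma s → IsFSigma t → Disjoint s t →
    Disjoint (closure s) (closure t)

/-- On a nonempty compact Hausdorff connected `F`-space, a nonconstant continuous
real-valued function `g` has: the closures of the preimages of the two open half-lines
determined by the midpoint `t` of the image are disjoint, do not cover `K`, and
consequently `g⁻¹({t})` has nonempty interior. -/
theorem midpoint_fiber_has_interior {K : Type*} [TopologicalSpace K] [Nonempty K]
    [CompactSpace K] [T2Space K] [ConnectedSpace K]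
    (hK : IsFSpace K) (g : K → ℝ) (hg : Continuous g)
    (hnc : ¬ ∃ c : ℝ, ∀ x, g x = c)
    (t : ℝ) (ht : t = (sInf (Set.range g) + sSup (Set.range g)) / 2) :
    Disjoint (closure (g ⁻¹' Set.Iio t)) (closure (g ⁻¹' Set.Ioi t)) ∧
    closure (g ⁻¹' Set.Iio t) ∪ closure (g ⁻¹' Set.Ioi t) ≠ Set.univ ∧
    (interior (g ⁻¹' {t})).Nonempty := by
  classical
  set a := sInf (Set.range g) with ha
  set b := sSup (Set.range g) with hb
  have hcomp : IsCompact (Set.range g) := isCompact_range hg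
  have hne : (Set.range g).Nonempty := Set.range_nonempty g
  have hbdd : BddBelow (Set.range g) := hcomp.bddBelow
  have hbdd' : BddAbove (Set.range g) := hcomp.bddAbove
  have hamem : a ∈ Set.range g := hcomp.sInf_mem hne
  have hbmem : b ∈ Set.range g := hcomp.sSup_mem hne
  have hle : ∀ x, a ≤ g x := fun x => csInf_le hbdd ⟨x, rfl⟩
  have hle' : ∀ x, g x ≤ b := fun x => le_csSup hbdd' ⟨x, rfl⟩
  have hab : a < b := by
    rcases lt_or_eq_of_le (csInf_le_csSup hne hbdd hbdd') with h | h
    · exact h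
    · exact absurd ⟨a, fun x => le_antisymm (by rw [ha, h]; exact hle' x) (hle x)⟩ hnc
  have hat : a < t := by rw [ht]; linarith
  have htb : t < b := by rw [ht]; linarith
  -- Fσ structure
  have hFσ1 : IsFSigma (g ⁻¹' Set.Iio t) := by
    refine ⟨fun n => g ⁻¹' Set.Iic (t - 1 / (n + 1)), fun n => isClosed_Iic.preimage hg, ?_⟩
    ext x
    simp only [Set.mem_preimage, Set.mem_Iio, Set.mem_iUnion, Set.mem_Iic]
    constructor
    · intro hx
      obtain ⟨n, hn⟩ := exists_nat_one_div_lt (sub_pos.mpr hx)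
      exact ⟨n, by push_cast at hn ⊢; linarith⟩
    · rintro ⟨n, hn⟩
      have : (0:ℝ) < 1 / (n + 1) := by positivity
      linarith
  have hFσ2 : IsFSigma (g ⁻¹' Set.Ioi t) := by
    refine ⟨fun n => g ⁻¹' Set.Ici (t + 1 / (n + 1)), fun n => isClosed_Ici.preimage hg, ?_⟩
    ext x
    simp only [Set.mem_preimage, Set.mem_Ioi, Set.mem_iUnion, Set.mem_Ici]
    constructor
    · intro hx
      obtain ⟨n, hn⟩ := exists_nat_one_div_lt (sub_pos.mpr hx)
      exact ⟨n, by push_cast at hn ⊢; linarith⟩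
    · rintro ⟨n, hn⟩
      have : (0:ℝ) < 1 / (n + 1) := by positivity
      linarith
  have hdisjpre : Disjoint (g ⁻¹' Set.Iio t) (g ⁻¹' Set.Ioi t) :=
    Set.disjoint_left.mpr fun x (hx : g x < t) (hx' : t < g x) => lt_asymm hx hx'
  have hdisj : Disjoint (closure (g ⁻¹' Set.Iio t)) (closure (g ⁻¹' Set.Ioi t)) :=
    hK _ _ (isOpen_Iio.preimage hg) (isOpen_Ioi.preimage hg) hFσ1 hFσ2 hdisjpre
  -- nonemptiness of both closures
  obtain ⟨xa, hxa⟩ := hamem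
  obtain ⟨xb, hxb⟩ := hbmem
  have hA : (closure (g ⁻¹' Set.Iio t)).Nonempty :=
    ⟨xa, subset_closure (by simp [Set.mem_Iio, hxa, hat])⟩
  have hB : (closure (g ⁻¹' Set.Ioi t)).Nonempty :=
    ⟨xb, subset_closure (by simp [Set.mem_Ioi, hxb, htb])⟩
  have hne_univ : closure (g ⁻¹' Set.Iio t) ∪ closure (g ⁻¹' Set.Ioi t) ≠ Set.univ := by
    intro hu
    have hopen : IsOpen (closure (g ⁻¹' Set.Iio t)) := by
      have hc : (closure (g ⁻¹' Set.Iio t))ᶜ = closure (g ⁻¹' Set.Ioi t) := by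
        apply Set.Subset.antisymm
        · intro x hx
          have : x ∈ closure (g ⁻¹' Set.Iio t) ∪ closure (g ⁻¹' Set.Ioi t) := hu ▸ Set.mem_univ x
          rcases this with h | h
          · exact absurd h hx
          · exact h
        · exact hdisj.subset_compl_left
      rw [← isClosed_compl_iff, hc]; exact isClosed_closure
    have hclopen : IsClopen (closure (g ⁻¹' Set.Iio t)) := ⟨isClosed_closure, hopen⟩
    rcases isClopen_iff.mp hclopen with h | h
    · exact hA.ne_empty h
    · obtain ⟨y, hy⟩ := hB
      exact Set.disjoint_left.mp hdisj (h ▸ Set.mem_univ y) hy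
  refine ⟨hdisj, hne_univ, ?_⟩
  obtain ⟨z, hz⟩ := Set.nonempty_compl.mpr hne_univ
  have hzopen : IsOpen (closure (g ⁻¹' Set.Iio t) ∪ closure (g ⁻¹' Set.Ioi t))ᶜ :=
    (isClosed_closure.union isClosed_closure).isOpen_compl
  have hsub : (closure (g ⁻¹' Set.Iio t) ∪ closure (g ⁻¹' Set.Ioi t))ᶜ ⊆ g ⁻¹' {t} := by
    intro x hx
    simp only [Set.mem_compl_iff, Set.mem_union, not_or] at hx
    have h1 : ¬ g x < t := fun h => hx.1 (subset_closure h)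
    have h2 : ¬ t < g x := fun h => hx.2 (subset_closure h)
    exact le_antisymm (not_lt.mp h2) (not_lt.mp h1)
  exact ⟨z, interior_maximal hsub hzopen hz⟩

end
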